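/- Let k ≥ 2 and let H = (V,E) be a hypergraph in the class ℋ_k. Then the chromatic index of H satisfies q(H) ≤ Δ([H]_2), where Δ([H]_2) is the maximum degree of the 2-section of H. -/

import Mathlib

open Finset

variable {V : Type*}

/-- The degree of a vertex `x`: number of hyperedges containing `x`. -/
def hyperDeg [DecidableEq V] (E : Finset (Finset V)) (x : V) : ℕ :=
  (E.filter fun e => x ∈ e).card

/-- A hypergraph is linear if two distinct hyperedges share at most one vertex. -/
def Linear [DecidableEq V] (E : Finset (Finset V)) : Prop :=
  ∀ e ∈ E, ∀ f ∈ E, e ≠ f → (e ∩ f).card ≤ 1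

/-- The degree of a hyperedge `e`: number of other hyperedges meeting `e`. -/
def edgeDeg [DecidableEq V] (E : Finset (Finset V)) (e : Finset V) : ℕ :=
  (E.filter fun a => a ≠ e ∧ (a ∩ e).Nonempty).card

/-- Degree of a vertex in the 2-section of the hypergraph. -/
def deg2 [Fintype V] [DecidableEq V] (E : Finset (Finset V)) (x : V) : ℕ :=
  (Finset.univ.filter fun y => y ≠ x ∧ ∃ e ∈ E, x ∈ e ∧ y ∈ e).card

/-- Maximum degree of the 2-section. -/
def maxDeg2 [Fintype V] [DecidableEq V] (E : Finset (Finset V)) : ℕ :=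
  Finset.univ.sup (deg2 E)

/-- Minimum degree of the 2-section. -/
noncomputable def minDeg2 [Fintype V] [DecidableEq V] (E : Finset (Finset V)) : ℕ :=
  sInf (Set.range (deg2 E))

/-- Maximum vertex degree of the hypergraph. -/
def maxDeg [Fintype V] [DecidableEq V] (E : Finset (Finset V)) : ℕ :=
  Finset.univ.sup (hyperDeg E)

/-- A proper hyperedge coloring with `q` colors. -/
def ColorableWith [DecidableEq V] (E : Finset (Finset V)) (q : ℕ) : Prop :=
  ∃ c : Finset V → Fin q, ∀ e ∈ E, ∀ f ∈ E, e ≠ f → (e ∩ f).Nonempty → c e ≠ c f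

/-- The chromatic index: least number of colors in a proper hyperedge coloring. -/
noncomputable def chromIndex [DecidableEq V] (E : Finset (Finset V)) : ℕ :=
  sInf {q | ColorableWith E q}

lemma greedyColor [DecidableEq V] {q : ℕ} (hq : 0 < q) (S : Finset (Finset V))
    (hS : ∀ e ∈ S, (S.filter fun f => f ≠ e ∧ (f ∩ e).Nonempty).card < q) :
    ∃ c : Finset V → Fin q, ∀ e ∈ S, ∀ f ∈ S, e ≠ f → (e ∩ f).Nonempty → c e ≠ c f := by
  classical
  induction S using Finset.induction_on with
  | empty => exact ⟨fun _ => ⟨0, hq⟩, by simp⟩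
  | @insert a s ha ih =>
    have hs : ∀ e ∈ s, (s.filter fun f => f ≠ e ∧ (f ∩ e).Nonempty).card < q := by
      intro e he
      exact lt_of_le_of_lt
        (Finset.card_le_card (Finset.filter_subset_filter _ (Finset.subset_insert a s)))
        (hS e (mem_insert_of_mem he))
    obtain ⟨c, hc⟩ := ih hs
    set ns := s.filter (fun f => f ≠ a ∧ (f ∩ a).Nonempty) with hns_def
    have hns : ns.card < q :=
      lt_of_le_of_lt
        (Finset.card_le_card (Finset.filter_subset_filter _ (Finset.subset_insert a s)))
        (hS a (mem_insert_self a s))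
    have hex : ∃ col : Fin q, col ∉ ns.image c := by
      by_contra h
      push_neg at h
      have hsub : (Finset.univ : Finset (Fin q)) ⊆ ns.image c := fun col _ => h col
      have h1 := Finset.card_le_card hsub
      have h2 := Finset.card_image_le (s := ns) (f := c)
      simp [Finset.card_univ] at h1
      omega
    obtain ⟨col, hcol⟩ := hex
    refine ⟨Function.update c a col, ?_⟩
    intro e he f hf hef hint
    rcases Finset.mem_insert.mp he with rfl | he'
    · rcases Finset.mem_insert.mp hf with rfl | hf'
      · exact absurd rfl hef
      · have hfa : f ≠ e := fun h => ha (h ▸ hf')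
        rw [Function.update_self, Function.update_of_ne hfa]
        have hmem : c f ∈ ns.image c :=
          Finset.mem_image_of_mem c
            (Finset.mem_filter.mpr ⟨hf', hfa, by rwa [Finset.inter_comm]⟩)
        exact fun h => hcol (h ▸ hmem)
    · rcases Finset.mem_insert.mp hf with rfl | hf'
      · have hea : e ≠ f := fun h => ha (h ▸ he')
        rw [Function.update_self, Function.update_of_ne hea]
        have hmem : c e ∈ ns.image c :=
          Finset.mem_image_of_mem c (Finset.mem_filter.mpr ⟨he', hea, hint⟩)
        exact fun h => hcol (h ▸ hmem)
      · have h1 : e ≠ a := fun h => ha (h ▸ he')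
        have h2 : f ≠ a := fun h => ha (h ▸ hf')
        rw [Function.update_of_ne h1, Function.update_of_ne h2]
        exact hc e he' f hf' hef hint

lemma sumSqueeze {α : Type*} [DecidableEq α] {s : Finset α} {f : α → ℕ} {c : ℕ}
    (h1 : ∀ i ∈ s, c ≤ f i) (h2 : ∑ i ∈ s, f i = c * s.card) :
    ∀ i ∈ s, f i = c := by
  intro i hi
  by_contra h
  have hlt : c + 1 ≤ f i := lt_of_le_of_ne (h1 i hi) (Ne.symm h)
  have hsum : f i + ∑ x ∈ s.erase i, f x = ∑ x ∈ s, f x := Finset.add_sum_erase s f hi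
  have hge : (s.erase i).card • c ≤ ∑ x ∈ s.erase i, f x :=
    Finset.card_nsmul_le_sum _ _ _ (fun x hx => h1 x (Finset.mem_of_mem_erase hx))
  have hcard : (s.erase i).card = s.card - 1 := Finset.card_erase_of_mem hi
  have hpos : 1 ≤ s.card := Finset.card_pos.mpr ⟨i, hi⟩
  obtain ⟨m, hm⟩ : ∃ m, s.card = m + 1 := ⟨s.card - 1, by omega⟩
  rw [hm] at h2 hcard
  rw [hcard] at hge
  simp only [smul_eq_mul] at hge
  have e1 : c * (m + 1) = c * m + c := by ring
  have e2 : (m + 1 - 1) * c = c * m := by simp [mul_comm]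
  omega

lemma sum_hyperDeg_eq [Fintype V] [DecidableEq V] (E : Finset (Finset V)) :
    ∑ x, hyperDeg E x = ∑ e ∈ E, e.card := by
  unfold hyperDeg
  simp only [Finset.card_filter]
  rw [Finset.sum_comm]
  refine Finset.sum_congr rfl fun e he => ?_
  rw [← Finset.card_filter]
  simp [Finset.filter_univ_mem]
lemma iffMagic1 {A B A' B' : Prop} (hA : A ↔ A') (hC : B ↔ ¬ B') :
    ¬((A ↔ B) ↔ (A' ↔ B')) := by tauto

lemma iffMagic2 {A B A' B' : Prop} (hA : A ↔ ¬ A') (hC : B ↔ B') :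
    ¬((A ↔ B) ↔ (A' ↔ B')) := by tauto

theorem stmt11 {V : Type*} [Fintype V] [DecidableEq V] (k : ℕ) (hk : 2 ≤ k)
    (E : Finset (Finset V)) (e₀ : Finset V)
    (hlin : Linear E) (huni : ∀ e ∈ E, e.card = k)
    (hV : Fintype.card V = k ^ 2) (hEcard : E.card = k ^ 2 + 1)
    (he₀ : e₀ ∈ E) (hdeg₀ : ∀ x ∈ e₀, hyperDeg E x = k + 1)
    (hdeg : ∀ x : V, x ∉ e₀ → k ≤ hyperDeg E x) :
    chromIndex E ≤ maxDeg2 E := by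
  classical
  have he₀k : e₀.card = k := huni e₀ he₀
  -- intersecting distinct edges meet in exactly one vertex
  have hsing : ∀ e ∈ E, ∀ f ∈ E, e ≠ f → ∀ x, x ∈ e → x ∈ f → e ∩ f = {x} := by
    intro e he f hf hef x hxe hxf
    have h1 := hlin e he f hf hef
    have hx : ({x} : Finset V) ⊆ e ∩ f := by
      simp [Finset.singleton_subset_iff, Finset.mem_inter, hxe, hxf]
    exact (Finset.eq_of_subset_of_card_le hx (by simpa using h1)).symm
  -- every vertex outside e₀ has degree exactly k
  have hdegout : ∀ x : V, x ∉ e₀ → hyperDeg E x = k := by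
    have hsum : ∑ x, hyperDeg E x = k * (k ^ 2 + 1) := by
      rw [sum_hyperDeg_eq, Finset.sum_congr rfl (fun e he => huni e he),
        Finset.sum_const, hEcard, smul_eq_mul, mul_comm]
    have hsub : e₀ ⊆ (Finset.univ : Finset V) := Finset.subset_univ _
    have hsplit : ∑ x ∈ Finset.univ \ e₀, hyperDeg E x + ∑ x ∈ e₀, hyperDeg E x
        = ∑ x, hyperDeg E x := Finset.sum_sdiff hsub
    have h1 : ∑ x ∈ e₀, hyperDeg E x = k * (k + 1) := by
      rw [Finset.sum_congr rfl (fun x hx => hdeg₀ x hx), Finset.sum_const, he₀k,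
        smul_eq_mul]
    have hk2 : k ≤ k ^ 2 := by nlinarith
    have hcard : (Finset.univ \ e₀).card = k ^ 2 - k := by
      rw [Finset.card_sdiff_of_subset hsub, Finset.card_univ, hV, he₀k]
    have h2 : ∑ x ∈ Finset.univ \ e₀, hyperDeg E x = k * ((Finset.univ \ e₀).card) := by
      rw [hcard]
      obtain ⟨s, hs⟩ : ∃ s, k ^ 2 = k + s := ⟨k ^ 2 - k, by omega⟩
      have e1 : k * (k ^ 2 + 1) = k * (k + 1) + k * s := by rw [hs]; ring
      have e2 : k ^ 2 - k = s := by omega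
      rw [e2]; omega
    have := sumSqueeze (s := Finset.univ \ e₀) (f := hyperDeg E) (c := k)
      (fun x hx => hdeg x (Finset.mem_sdiff.mp hx).2) (by rw [h2, mul_comm])
    intro x hx
    exact this x (Finset.mem_sdiff.mpr ⟨Finset.mem_univ x, hx⟩)
  -- the 2-section has a vertex of degree ≥ k² - 1
  have hmax : k ^ 2 - 1 ≤ maxDeg2 E := by
    obtain ⟨x0, hx0⟩ : ∃ x, x ∈ e₀ := Finset.card_pos.mp (by omega)
    have hdeg2 : (k + 1) * (k - 1) ≤ deg2 E x0 := by
      have hNsub : (E.filter fun e => x0 ∈ e).biUnion (fun e => e.erase x0)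
          ⊆ Finset.univ.filter fun y => y ≠ x0 ∧ ∃ e ∈ E, x0 ∈ e ∧ y ∈ e := by
        intro y hy
        simp only [Finset.mem_biUnion, Finset.mem_filter, Finset.mem_erase,
          Finset.mem_univ, true_and] at hy ⊢
        obtain ⟨e, ⟨heE, hx0e⟩, hyne, hye⟩ := hy
        exact ⟨hyne, e, heE, hx0e, hye⟩
      have hcardN : ((E.filter fun e => x0 ∈ e).biUnion (fun e => e.erase x0)).card
          = (k + 1) * (k - 1) := by
        rw [Finset.card_biUnion]
        · rw [Finset.sum_congr rfl (fun e he => ?_), Finset.sum_const]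
          · have : (E.filter fun e => x0 ∈ e).card = k + 1 := hdeg₀ x0 hx0
            rw [this, smul_eq_mul]
          · have heE := (Finset.mem_filter.mp he).1
            have hx0e := (Finset.mem_filter.mp he).2
            rw [Finset.card_erase_of_mem hx0e, huni e heE]
        · intro e he f hf hef
          have heE := (Finset.mem_filter.mp he).1
          have hfE := (Finset.mem_filter.mp hf).1
          have hx0e := (Finset.mem_filter.mp he).2
          have hx0f := (Finset.mem_filter.mp hf).2
          have hinter := hsing e heE f hfE hef x0 hx0e hx0f
          rw [Function.onFun, Finset.disjoint_left]
          intro y hye hyf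
          have h1 := Finset.mem_erase.mp hye
          have h2 := Finset.mem_erase.mp hyf
          have : y ∈ e ∩ f := Finset.mem_inter.mpr ⟨h1.2, h2.2⟩
          rw [hinter, Finset.mem_singleton] at this
          exact h1.1 this
      calc (k + 1) * (k - 1) = _ := hcardN.symm
        _ ≤ deg2 E x0 := Finset.card_le_card hNsub
    have hmd : deg2 E x0 ≤ maxDeg2 E := Finset.le_sup (Finset.mem_univ x0)
    have harith : (k + 1) * (k - 1) = k ^ 2 - 1 := by
      obtain ⟨m, rfl⟩ : ∃ m, k = m + 2 := ⟨k - 2, by omega⟩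
      have e1 : (m + 2) ^ 2 = m * m + 4 * m + 4 := by ring
      have e2 : (m + 2 + 1) * (m + 2 - 1) = m * m + 4 * m + 3 := by
        have : m + 2 - 1 = m + 1 := by omega
        rw [this]; ring
      omega
    omega
  -- main colorability claim
  have hcol : ColorableWith E (k ^ 2 - 1) := by
    rcases Nat.lt_or_ge k 3 with hk3 | hk3
    · -- k = 2
      have hk2 : k = 2 := by omega
      subst hk2
      -- every other edge meets e₀ in exactly one vertex
      have hmeet : ∀ e ∈ E, e ≠ e₀ → ∃ x, x ∈ e₀ ∧ e ∩ e₀ = {x} := by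
        have hT : (E.erase e₀).filter (fun e => (e ∩ e₀).Nonempty)
            = e₀.biUnion (fun x => (E.erase e₀).filter (fun e => x ∈ e)) := by
          ext f
          simp only [Finset.mem_filter, Finset.mem_biUnion]
          constructor
          · rintro ⟨hf, x, hx⟩
            exact ⟨x, (Finset.mem_inter.mp hx).2, hf, (Finset.mem_inter.mp hx).1⟩
          · rintro ⟨x, hx, hf, hxf⟩
            exact ⟨hf, x, Finset.mem_inter.mpr ⟨hxf, hx⟩⟩
        have hdisj : ∀ x ∈ e₀, ∀ y ∈ e₀, x ≠ y →
            Disjoint ((E.erase e₀).filter (fun e => x ∈ e))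
              ((E.erase e₀).filter (fun e => y ∈ e)) := by
          intro x hx y hy hxy
          rw [Finset.disjoint_left]
          intro f hf1 hf2
          have hfE : f ∈ E := Finset.mem_of_mem_erase (Finset.mem_filter.mp hf1).1
          have hfne : f ≠ e₀ := Finset.ne_of_mem_erase (Finset.mem_filter.mp hf1).1
          have hxf : x ∈ f := (Finset.mem_filter.mp hf1).2
          have hyf : y ∈ f := (Finset.mem_filter.mp hf2).2
          have hcard := hlin f hfE e₀ he₀ hfne
          have hsub : ({x, y} : Finset V) ⊆ f ∩ e₀ := by
            intro z hz
            rcases Finset.mem_insert.mp hz with rfl | hz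
            · exact Finset.mem_inter.mpr ⟨hxf, hx⟩
            · rw [Finset.mem_singleton] at hz
              subst hz
              exact Finset.mem_inter.mpr ⟨hyf, hy⟩
          have h2 : ({x, y} : Finset V).card = 2 := Finset.card_pair hxy
          have := Finset.card_le_card hsub
          omega
        have hcardfil : ∀ x ∈ e₀, ((E.erase e₀).filter (fun e => x ∈ e)).card = 2 := by
          intro x hx
          have heq : (E.erase e₀).filter (fun e => x ∈ e)
              = (E.filter (fun e => x ∈ e)).erase e₀ := by
            ext f
            simp only [Finset.mem_filter, Finset.mem_erase]
            tauto
          rw [heq, Finset.card_erase_of_mem (Finset.mem_filter.mpr ⟨he₀, hx⟩)]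
          have := hdeg₀ x hx
          unfold hyperDeg at this
          omega
        have hcardT : ((E.erase e₀).filter (fun e => (e ∩ e₀).Nonempty)).card = 4 := by
          rw [hT, Finset.card_biUnion hdisj,
            Finset.sum_congr rfl hcardfil, Finset.sum_const, he₀k]
          norm_num
        have hES : (E.erase e₀).card = 4 := by
          rw [Finset.card_erase_of_mem he₀, hEcard]
          norm_num
        have hTall : (E.erase e₀).filter (fun e => (e ∩ e₀).Nonempty) = E.erase e₀ :=
          Finset.eq_of_subset_of_card_le (Finset.filter_subset _ _) (by omega)
        intro e he hene
        have heS : e ∈ E.erase e₀ := Finset.mem_erase.mpr ⟨hene, he⟩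
        rw [← hTall] at heS
        obtain ⟨x, hx⟩ := (Finset.mem_filter.mp heS).2
        refine ⟨x, (Finset.mem_inter.mp hx).2, ?_⟩
        exact hsing e he e₀ he₀ hene x (Finset.mem_inter.mp hx).1 (Finset.mem_inter.mp hx).2
      obtain ⟨a, ha⟩ : ∃ a, a ∈ e₀ := Finset.card_pos.mp (by omega)
      have hVout : ((Finset.univ : Finset V) \ e₀).card = 2 := by
        rw [Finset.card_sdiff_of_subset (Finset.subset_univ _), Finset.card_univ, hV, he₀k]
        norm_num
      obtain ⟨cv, hcv⟩ : ∃ cv, cv ∈ (Finset.univ : Finset V) \ e₀ :=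
        Finset.card_pos.mp (by omega)
      have hcv₀ : cv ∉ e₀ := (Finset.mem_sdiff.mp hcv).2
      -- structure of each non-e₀ edge
      have hstruct : ∀ e ∈ E, e ≠ e₀ → ∃ xe ye, xe ∈ e₀ ∧ ye ∉ e₀ ∧ xe ∈ e ∧ ye ∈ e ∧
          (∀ z ∈ e, z = xe ∨ z = ye) := by
        intro e he hene
        obtain ⟨xe, hxe₀, hinter⟩ := hmeet e he hene
        have hxee : xe ∈ e := by
          have : xe ∈ e ∩ e₀ := by rw [hinter]; exact Finset.mem_singleton_self xe
          exact (Finset.mem_inter.mp this).1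
        have hsd : (e \ e₀).card = 1 := by
          have h1 := Finset.card_sdiff_add_card_inter e e₀
          rw [hinter, Finset.card_singleton, huni e he] at h1
          omega
        obtain ⟨ye, hye⟩ := Finset.card_eq_one.mp hsd
        have hyee : ye ∈ e ∧ ye ∉ e₀ := by
          have : ye ∈ e \ e₀ := by rw [hye]; exact Finset.mem_singleton_self ye
          exact ⟨(Finset.mem_sdiff.mp this).1, (Finset.mem_sdiff.mp this).2⟩
        refine ⟨xe, ye, hxe₀, hyee.2, hxee, hyee.1, ?_⟩
        intro z hz
        by_cases hz₀ : z ∈ e₀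
        · left
          have : z ∈ e ∩ e₀ := Finset.mem_inter.mpr ⟨hz, hz₀⟩
          rw [hinter, Finset.mem_singleton] at this
          exact this
        · right
          have : z ∈ e \ e₀ := Finset.mem_sdiff.mpr ⟨hz, hz₀⟩
          rw [hye, Finset.mem_singleton] at this
          exact this
      have h3 : (2 : ℕ) ^ 2 - 1 = 3 := by norm_num
      rw [h3]
      refine ⟨fun f => if f = e₀ then (2 : Fin 3)
        else if a ∈ f ↔ cv ∈ f then 0 else 1, ?_⟩
      intro e he f hf hef hint
      by_cases he' : e = e₀ <;> by_cases hf' : f = e₀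
      · exact absurd (he'.trans hf'.symm) hef
      · simp only [if_pos he', if_neg hf']
        split_ifs <;> decide
      · simp only [if_neg he', if_pos hf']
        split_ifs <;> decide
      · simp only [if_neg he', if_neg hf']
        obtain ⟨v, hv⟩ := hint
        have hve : v ∈ e := (Finset.mem_inter.mp hv).1
        have hvf : v ∈ f := (Finset.mem_inter.mp hv).2
        obtain ⟨xe, ye, hxe₀, hye₀, hxee, hyee, hmeme⟩ := hstruct e he he'
        obtain ⟨xf, yf, hxf₀, hyf₀, hxff, hyff, hmemf⟩ := hstruct f hf hf'
        have hae : a ∈ e ↔ a = xe := by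
          constructor
          · intro h
            rcases hmeme a h with h' | h'
            · exact h'
            · exact absurd (h' ▸ ha) hye₀
          · intro h; exact h ▸ hxee
        have haf : a ∈ f ↔ a = xf := by
          constructor
          · intro h
            rcases hmemf a h with h' | h'
            · exact h'
            · exact absurd (h' ▸ ha) hyf₀
          · intro h; exact h ▸ hxff
        have hcve : cv ∈ e ↔ cv = ye := by
          constructor
          · intro h
            rcases hmeme cv h with h' | h'
            · exact absurd (h' ▸ hcv₀) (not_not_intro hxe₀)
            · exact h'
          · intro h; exact h ▸ hyee
        have hcvf : cv ∈ f ↔ cv = yf := by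
          constructor
          · intro h
            rcases hmemf cv h with h' | h'
            · exact absurd (h' ▸ hcv₀) (not_not_intro hxf₀)
            · exact h'
          · intro h; exact h ▸ hyff
        by_cases hv₀ : v ∈ e₀
        · -- shared vertex is in e₀: xe = xf, ye ≠ yf, and cv is one of ye,yf
          have hvxe : v = xe := by
            rcases hmeme v hve with h' | h'
            · exact h'
            · exact absurd (h' ▸ hv₀) hye₀
          have hvxf : v = xf := by
            rcases hmemf v hvf with h' | h'
            · exact h'
            · exact absurd (h' ▸ hv₀) hyf₀
          have hxx : xe = xf := hvxe ▸ hvxf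
          have hyney : ye ≠ yf := by
            intro hyy
            apply hef
            apply Finset.Subset.antisymm <;> intro z hz
            · rcases hmeme z hz with rfl | rfl
              · exact hxx ▸ hxff
              · exact hyy ▸ hyff
            · rcases hmemf z hz with rfl | rfl
              · exact hxx.symm ▸ hxee
              · exact hyy.symm ▸ hyee
          have hout : (Finset.univ : Finset V) \ e₀ = {ye, yf} := by
            refine (Finset.eq_of_subset_of_card_le ?_ ?_).symm
            · intro z hz
              rcases Finset.mem_insert.mp hz with rfl | hz
              · exact Finset.mem_sdiff.mpr ⟨Finset.mem_univ _, hye₀⟩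
              · rw [Finset.mem_singleton] at hz
                subst hz
                exact Finset.mem_sdiff.mpr ⟨Finset.mem_univ _, hyf₀⟩
            · rw [hVout, Finset.card_pair hyney]
          have hor : cv = ye ∨ cv = yf := by
            have : cv ∈ ({ye, yf} : Finset V) := hout ▸ hcv
            simpa using this
          have hA : a ∈ e ↔ a ∈ f := by rw [hae, haf, hxx]
          have hC : cv ∈ e ↔ ¬ cv ∈ f := by
            rw [hcve, hcvf]
            constructor
            · intro h1 h2; exact hyney (h1.symm.trans h2)
            · intro h1; rcases hor with h | h; exacts [h, absurd h h1]
          have hne := iffMagic1 hA hC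
          by_cases p : a ∈ e ↔ cv ∈ e <;> by_cases q : a ∈ f ↔ cv ∈ f
          · exact absurd (iff_of_true p q) hne
          · rw [if_pos p, if_neg q]; decide
          · rw [if_neg p, if_pos q]; decide
          · exact absurd (iff_of_false p q) hne
        · -- shared vertex outside e₀: ye = yf, xe ≠ xf, and a is one of xe,xf
          have hvye : v = ye := by
            rcases hmeme v hve with h' | h'
            · exact absurd (h' ▸ hv₀) (not_not_intro hxe₀)
            · exact h'
          have hvyf : v = yf := by
            rcases hmemf v hvf with h' | h'
            · exact absurd (h' ▸ hv₀) (not_not_intro hxf₀)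
            · exact h'
          have hyy : ye = yf := hvye ▸ hvyf
          have hxnex : xe ≠ xf := by
            intro hxx
            apply hef
            apply Finset.Subset.antisymm <;> intro z hz
            · rcases hmeme z hz with rfl | rfl
              · exact hxx ▸ hxff
              · exact hyy ▸ hyff
            · rcases hmemf z hz with rfl | rfl
              · exact hxx.symm ▸ hxee
              · exact hyy.symm ▸ hyee
          have hin : e₀ = {xe, xf} := by
            refine (Finset.eq_of_subset_of_card_le ?_ ?_).symm
            · intro z hz
              rcases Finset.mem_insert.mp hz with rfl | hz
              · exact hxe₀
              · rw [Finset.mem_singleton] at hz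
                subst hz
                exact hxf₀
            · rw [he₀k, Finset.card_pair hxnex]
          have hor : a = xe ∨ a = xf := by
            have : a ∈ ({xe, xf} : Finset V) := hin ▸ ha
            simpa using this
          have hA : a ∈ e ↔ ¬ a ∈ f := by
            rw [hae, haf]
            constructor
            · intro h1 h2; exact hxnex (h1.symm.trans h2)
            · intro h1; rcases hor with h | h; exacts [h, absurd h h1]
          have hC : cv ∈ e ↔ cv ∈ f := by rw [hcve, hcvf, hyy]
          have hne := iffMagic2 hA hC
          by_cases p : a ∈ e ↔ cv ∈ e <;> by_cases q : a ∈ f ↔ cv ∈ f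
          · exact absurd (iff_of_true p q) hne
          · rw [if_pos p, if_neg q]; decide
          · rw [if_neg p, if_pos q]; decide
          · exact absurd (iff_of_false p q) hne
    · -- k ≥ 3: greedy on E.erase e₀ with k² - 2 colors, then fresh color for e₀
      have hk9 : 9 ≤ k ^ 2 := by nlinarith
      have hbound : ∀ e ∈ E.erase e₀,
          ((E.erase e₀).filter fun f => f ≠ e ∧ (f ∩ e).Nonempty).card < k ^ 2 - 2 := by
        intro e he
        have heE : e ∈ E := Finset.mem_of_mem_erase he
        have hene : e ≠ e₀ := Finset.ne_of_mem_erase he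
        have hsubB : ((E.erase e₀).filter fun f => f ≠ e ∧ (f ∩ e).Nonempty)
            ⊆ e.biUnion (fun x => ((E.filter fun g => x ∈ g).erase e₀).erase e) := by
          intro f hf
          simp only [Finset.mem_filter, Finset.mem_erase] at hf
          obtain ⟨⟨hfne₀, hfE⟩, hfne, x, hx⟩ := hf
          have hxf := (Finset.mem_inter.mp hx).1
          have hxe := (Finset.mem_inter.mp hx).2
          exact Finset.mem_biUnion.mpr ⟨x, hxe, Finset.mem_erase.mpr ⟨hfne,
            Finset.mem_erase.mpr ⟨hfne₀, Finset.mem_filter.mpr ⟨hfE, hxf⟩⟩⟩⟩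
        have hb : ∀ x ∈ e, (((E.filter fun g => x ∈ g).erase e₀).erase e).card ≤ k - 1 := by
          intro x hxe
          have h3 : e ∈ (E.filter fun g => x ∈ g).erase e₀ :=
            Finset.mem_erase.mpr ⟨hene, Finset.mem_filter.mpr ⟨heE, hxe⟩⟩
          rw [Finset.card_erase_of_mem h3]
          by_cases hx0 : x ∈ e₀
          · have h1 : (E.filter fun g => x ∈ g).card = k + 1 := hdeg₀ x hx0
            have h2 : e₀ ∈ E.filter (fun g => x ∈ g) :=
              Finset.mem_filter.mpr ⟨he₀, hx0⟩
            rw [Finset.card_erase_of_mem h2, h1]; omega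
          · have h1 : (E.filter fun g => x ∈ g).card = k := hdegout x hx0
            have h2 := Finset.card_erase_le (s := E.filter fun g => x ∈ g) (a := e₀)
            omega
        calc ((E.erase e₀).filter fun f => f ≠ e ∧ (f ∩ e).Nonempty).card
            ≤ (e.biUnion (fun x => ((E.filter fun g => x ∈ g).erase e₀).erase e)).card :=
              Finset.card_le_card hsubB
          _ ≤ ∑ x ∈ e, (((E.filter fun g => x ∈ g).erase e₀).erase e).card :=
              Finset.card_biUnion_le
          _ ≤ ∑ _x ∈ e, (k - 1) := Finset.sum_le_sum hb
          _ = k * (k - 1) := by rw [Finset.sum_const, huni e heE, smul_eq_mul]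
          _ < k ^ 2 - 2 := by
              obtain ⟨m, rfl⟩ : ∃ m, k = m + 3 := ⟨k - 3, by omega⟩
              have e1 : (m + 3) * (m + 3 - 1) = m * m + 5 * m + 6 := by
                have h : m + 3 - 1 = m + 2 := by omega
                rw [h]; ring
              have e2 : (m + 3) ^ 2 = m * m + 6 * m + 9 := by ring
              omega
      obtain ⟨c, hc⟩ := greedyColor (q := k ^ 2 - 2) (by omega) (E.erase e₀) hbound
      refine ⟨fun e => if e = e₀ then ⟨k ^ 2 - 2, by omega⟩
        else ⟨(c e : ℕ), by have := (c e).isLt; omega⟩, ?_⟩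
      intro e he f hf hef hint
      by_cases he' : e = e₀ <;> by_cases hf' : f = e₀
      · exact absurd (he'.trans hf'.symm) hef
      · simp only [if_pos he', if_neg hf']
        have := (c f).isLt
        exact fun h => by
          have := congrArg Fin.val h
          simp at this
          omega
      · simp only [if_neg he', if_pos hf']
        have := (c e).isLt
        exact fun h => by
          have := congrArg Fin.val h
          simp at this
          omega
      · simp only [if_neg he', if_neg hf']
        intro h
        have hval := congrArg Fin.val h
        simp only [] at hval
        exact hc e (Finset.mem_erase.mpr ⟨he', he⟩) f (Finset.mem_erase.mpr ⟨hf', hf⟩)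
          hef hint (Fin.ext hval)
  have h1 : chromIndex E ≤ k ^ 2 - 1 := Nat.sInf_le hcol
  omega
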